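/- As s → ∞, the vector e^{As} e_1 converges to e_N, the last standard basis vector of ℝ^N; in particular lim_{s→∞} wᵀ e^{As} e_1 = 1. -/

import Mathlib

open Matrix Filter Real MeasureTheory intervalIntegral

/-- If `f' = g - a f` with `a > 0` and `g → 0`, then `f → 0`. -/
lemma ode_tendsto_zero {a : ℝ} (ha : 0 < a) {f g : ℝ → ℝ} (hgc : Continuous g)
    (hf : ∀ s : ℝ, HasDerivAt f (g s - a * f s) s)
    (hg : Tendsto g atTop (nhds 0)) : Tendsto f atTop (nhds 0) := by
  have hfc : Continuous f :=
    continuous_iff_continuousAt.2 fun x => (hf x).continuousAt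
  set F : ℝ → ℝ := fun t => f t * Real.exp (a * t) with hF
  have hFd : ∀ s : ℝ, HasDerivAt F (g s * Real.exp (a * s)) s := by
    intro s
    have he : HasDerivAt (fun t : ℝ => Real.exp (a * t)) (Real.exp (a * s) * (a * 1)) s :=
      ((hasDerivAt_id s).const_mul a).exp
    have h1 := (hf s).fun_mul he
    refine h1.congr_deriv ?_
    ring
  have hic : Continuous fun t => g t * Real.exp (a * t) :=
    hgc.mul (Real.continuous_exp.comp (continuous_const.mul continuous_id))
  have hFTC : ∀ T s : ℝ, F s = F T + ∫ t in T..s, g t * Real.exp (a * t) := by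
    intro T s
    have := integral_eq_sub_of_hasDerivAt (fun t _ => hFd t) ((hic).intervalIntegrable T s)
    rw [this]; ring
  rw [Metric.tendsto_atTop]
  intro ε hε
  obtain ⟨T, hT⟩ := Metric.tendsto_atTop.mp hg (a * ε / 4) (by positivity)
  have hexp0 : Tendsto (fun s : ℝ => |F T| * Real.exp (-(a * s))) atTop (nhds 0) := by
    have h1 : Tendsto (fun s : ℝ => a * s) atTop atTop :=
      Tendsto.const_mul_atTop ha tendsto_id
    have h2 : Tendsto (fun s : ℝ => Real.exp (-(a * s))) atTop (nhds 0) :=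
      Real.tendsto_exp_atBot.comp (tendsto_neg_atBot_iff.mpr h1)
    have h3 := h2.const_mul (|F T|)
    simpa using h3
  obtain ⟨T2, hT2⟩ := Metric.tendsto_atTop.mp hexp0 (ε / 2) (by positivity)
  refine ⟨max T T2, fun s hs => ?_⟩
  have hsT : T ≤ s := le_trans (le_max_left _ _) hs
  have hsT2 : T2 ≤ s := le_trans (le_max_right _ _) hs
  -- bound on the integral
  have hIb : |∫ t in T..s, g t * Real.exp (a * t)| ≤ ε / 4 * Real.exp (a * s) := by
    have h1 : |∫ t in T..s, g t * Real.exp (a * t)|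
        ≤ |∫ t in T..s, a * ε / 4 * Real.exp (a * t)| := by
      rw [← Real.norm_eq_abs]
      apply intervalIntegral.norm_integral_le_abs_of_norm_le
      · rw [Set.uIoc_of_le hsT]
        filter_upwards [ae_restrict_mem measurableSet_Ioc] with t ht
        have hgt : |g t| ≤ a * ε / 4 := by
          have := hT t (le_of_lt ht.1)
          rw [Real.dist_eq, sub_zero] at this
          linarith [this]
        rw [Real.norm_eq_abs, abs_mul, abs_of_pos (Real.exp_pos _)]
        exact mul_le_mul_of_nonneg_right hgt (le_of_lt (Real.exp_pos _))
      · exact ((continuous_const.mul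
          (Real.continuous_exp.comp (continuous_const.mul continuous_id))).intervalIntegrable T s)
    have h2 : (∫ t in T..s, a * ε / 4 * Real.exp (a * t))
        = ε / 4 * Real.exp (a * s) - ε / 4 * Real.exp (a * T) := by
      have hD : ∀ t : ℝ, HasDerivAt (fun u => ε / 4 * Real.exp (a * u))
          (a * ε / 4 * Real.exp (a * t)) t := by
        intro t
        have he : HasDerivAt (fun u : ℝ => Real.exp (a * u)) (Real.exp (a * t) * (a * 1)) t :=
          ((hasDerivAt_id t).const_mul a).exp
        have := he.const_mul (ε / 4)
        refine this.congr_deriv ?_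
        ring
      rw [integral_eq_sub_of_hasDerivAt (fun t _ => hD t)
        ((continuous_const.mul
          (Real.continuous_exp.comp (continuous_const.mul continuous_id))).intervalIntegrable T s)]
    have hmono : Real.exp (a * T) ≤ Real.exp (a * s) :=
      Real.exp_le_exp.mpr (mul_le_mul_of_nonneg_left hsT ha.le)
    have h4 : |∫ t in T..s, a * ε / 4 * Real.exp (a * t)|
        = ε / 4 * Real.exp (a * s) - ε / 4 * Real.exp (a * T) := by
      rw [h2]; exact abs_of_nonneg (by nlinarith)
    have := h1.trans_eq h4
    nlinarith [Real.exp_pos (a * T)]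
  -- assemble
  have hfs : f s = F s * Real.exp (-(a * s)) := by
    rw [hF]
    simp only []
    rw [mul_assoc, ← Real.exp_add, add_neg_cancel, Real.exp_zero, mul_one]
  rw [Real.dist_eq, sub_zero, hfs, hFTC T s]
  have hE := Real.exp_pos (-(a * s))
  calc |(F T + ∫ t in T..s, g t * Real.exp (a * t)) * Real.exp (-(a * s))|
      = |F T + ∫ t in T..s, g t * Real.exp (a * t)| * Real.exp (-(a * s)) := by
        rw [abs_mul, abs_of_pos hE]
    _ ≤ (|F T| + ε / 4 * Real.exp (a * s)) * Real.exp (-(a * s)) := by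
        apply mul_le_mul_of_nonneg_right _ (le_of_lt hE)
        exact le_trans (abs_add_le _ _) (by linarith [hIb])
    _ = |F T| * Real.exp (-(a * s)) + ε / 4 * (Real.exp (a * s) * Real.exp (-(a * s))) := by ring
    _ = |F T| * Real.exp (-(a * s)) + ε / 4 := by
        rw [← Real.exp_add, add_neg_cancel, Real.exp_zero, mul_one]
    _ < ε / 2 + ε / 4 := by
        have := hT2 s hsT2
        rw [Real.dist_eq, sub_zero, abs_of_nonneg
          (mul_nonneg (abs_nonneg _) (le_of_lt (Real.exp_pos _)))] at this
        linarith
    _ < ε := by linarith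

lemma exp_mulVec_entry_hasDerivAt {N : ℕ} (A : Matrix (Fin N) (Fin N) ℝ)
    (v : Fin N → ℝ) (j : Fin N) (s : ℝ) :
    HasDerivAt (fun t : ℝ => (NormedSpace.exp (t • A) *ᵥ v) j)
      ((A *ᵥ (NormedSpace.exp (s • A) *ᵥ v)) j) s := by
  letI : SeminormedRing (Matrix (Fin N) (Fin N) ℝ) := Matrix.linftyOpSemiNormedRing
  letI : NormedRing (Matrix (Fin N) (Fin N) ℝ) := Matrix.linftyOpNormedRing
  letI : NormedAlgebra ℝ (Matrix (Fin N) (Fin N) ℝ) := Matrix.linftyOpNormedAlgebra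
  have hexp : HasDerivAt (fun t : ℝ => NormedSpace.exp (t • A))
      (A * NormedSpace.exp (s • A)) s := hasDerivAt_exp_smul_const' A s
  let L : Matrix (Fin N) (Fin N) ℝ →ₗ[ℝ] ℝ :=
    { toFun := fun M => (M *ᵥ v) j
      map_add' := by intro M M'; simp [Matrix.add_mulVec]
      map_smul' := by intro c M; simp [Matrix.smul_mulVec] }
  have hL := (LinearMap.toContinuousLinearMap L).hasFDerivAt (x := NormedSpace.exp (s • A))
  have := hL.comp_hasDerivAt s hexp
  have heq : L (A * NormedSpace.exp (s • A)) = (A *ᵥ (NormedSpace.exp (s • A) *ᵥ v)) j := by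
    show ((A * NormedSpace.exp (s • A)) *ᵥ v) j = _
    rw [← Matrix.mulVec_mulVec]
  rw [← heq]
  exact this

open Matrix Filter

/-- As `s → ∞`, `e^{As} e₁` converges to the last standard basis vector `e_N`, and hence
`wᵀ e^{As} e₁ → 1` (everyone eventually gets infected in the Infection model). -/
theorem infection_exp_tendsto_last (N : ℕ) (hN : 2 ≤ N) (lc : ℝ) (hlc : 0 < lc)
    (A : Matrix (Fin N) (Fin N) ℝ)
    (hA : ∀ i j : Fin N, A i j =
      if (i : ℕ) = (j : ℕ) then
        -((((i : ℕ) : ℝ) + 1) * ((N : ℝ) - (((i : ℕ) : ℝ) + 1)) * lc)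
      else if (i : ℕ) = (j : ℕ) + 1 then
        (((j : ℕ) : ℝ) + 1) * ((N : ℝ) - (((j : ℕ) : ℝ) + 1)) * lc
      else 0)
    (w : Fin N → ℝ) (hw : ∀ k : Fin N, w k = ((k : ℕ) : ℝ) / ((N : ℝ) - 1))
    (e1 : Fin N → ℝ) (he1 : ∀ j : Fin N, e1 j = if (j : ℕ) = 0 then 1 else 0)
    (eN : Fin N → ℝ) (heN : ∀ j : Fin N, eN j = if (j : ℕ) = N - 1 then 1 else 0) :
    Tendsto (fun s : ℝ => NormedSpace.exp (s • A) *ᵥ e1) atTop (nhds eN) ∧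
    Tendsto (fun s : ℝ => w ⬝ᵥ (NormedSpace.exp (s • A) *ᵥ e1)) atTop (nhds 1) := by
  set P : ℝ → Fin N → ℝ := fun s => NormedSpace.exp (s • A) *ᵥ e1 with hPdef
  have hderiv : ∀ (j : Fin N) (s : ℝ),
      HasDerivAt (fun t => P t j) ((A *ᵥ P s) j) s :=
    fun j s => exp_mulVec_entry_hasDerivAt A e1 j s
  have hPcont : ∀ j : Fin N, Continuous fun s => P s j :=
    fun j => continuous_iff_continuousAt.2 fun s => (hderiv j s).continuousAt
  set d : Fin N → ℝ := fun j => (((j : ℕ) : ℝ) + 1) * ((N : ℝ) - (((j : ℕ) : ℝ) + 1)) * lc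
    with hddef
  -- diagonal and subdiagonal entries
  have hAdiag : ∀ j : Fin N, A j j = -(d j) := by
    intro j; rw [hA]; simp [hddef]
  have hAsub : ∀ (j p : Fin N), (j : ℕ) = (p : ℕ) + 1 → A j p = d p := by
    intro j p hjp; rw [hA]
    have h1 : (j : ℕ) ≠ (p : ℕ) := by omega
    rw [if_neg h1, if_pos hjp]
  -- mulVec formulas
  have hmv0 : ∀ (v : Fin N → ℝ) (j : Fin N), (j : ℕ) = 0 →
      (A *ᵥ v) j = 0 - d j * v j := by
    intro v j hj
    show (∑ k, A j k * v k) = 0 - d j * v j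
    rw [Finset.sum_eq_single j]
    · rw [hAdiag]; ring
    · intro k _ hk
      rw [hA, if_neg (by simpa [Fin.ext_iff] using (Ne.symm hk)), if_neg (by omega)]
      ring
    · intro h; exact absurd (Finset.mem_univ j) h
  have hmvS : ∀ (v : Fin N → ℝ) (j p : Fin N), (j : ℕ) = (p : ℕ) + 1 →
      (A *ᵥ v) j = d p * v p - d j * v j := by
    intro v j p hjp
    show (∑ k, A j k * v k) = d p * v p - d j * v j
    have hpj : p ≠ j := by intro h; rw [h] at hjp; omega
    have hpmem : p ∈ Finset.univ.erase j :=
      Finset.mem_erase.mpr ⟨hpj, Finset.mem_univ p⟩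
    rw [← Finset.add_sum_erase _ _ (Finset.mem_univ j),
        ← Finset.add_sum_erase _ _ hpmem]
    have hrest : (∑ k ∈ (Finset.univ.erase j).erase p, A j k * v k) = 0 := by
      apply Finset.sum_eq_zero
      intro k hk
      have hkp : k ≠ p := (Finset.mem_erase.mp hk).1
      have hkj : k ≠ j := (Finset.mem_erase.mp (Finset.mem_erase.mp hk).2).1
      have hv1 : (j : ℕ) ≠ (k : ℕ) := by
        simpa [Fin.ext_iff] using (Ne.symm hkj)
      have hv2 : (j : ℕ) ≠ (k : ℕ) + 1 := by
        have : (p : ℕ) ≠ (k : ℕ) := by simpa [Fin.ext_iff] using (Ne.symm hkp)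
        omega
      rw [hA, if_neg hv1, if_neg hv2]; ring
    rw [hrest, hAdiag, hAsub j p hjp]
    ring
  -- column sums are zero
  have hcol : ∀ k : Fin N, (∑ j, A j k) = 0 := by
    intro k
    by_cases hk : (k : ℕ) + 1 < N
    · set q : Fin N := ⟨(k : ℕ) + 1, hk⟩ with hq
      have hqk : q ≠ k := by simp [hq, Fin.ext_iff]
      have hqmem : q ∈ Finset.univ.erase k :=
        Finset.mem_erase.mpr ⟨hqk, Finset.mem_univ q⟩
      rw [← Finset.add_sum_erase _ _ (Finset.mem_univ k),
          ← Finset.add_sum_erase _ _ hqmem]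
      have hrest : (∑ j ∈ (Finset.univ.erase k).erase q, A j k) = 0 := by
        apply Finset.sum_eq_zero
        intro j hj
        have hjq : j ≠ q := (Finset.mem_erase.mp hj).1
        have hjk : j ≠ k := (Finset.mem_erase.mp (Finset.mem_erase.mp hj).2).1
        have hv1 : (j : ℕ) ≠ (k : ℕ) := by simpa [Fin.ext_iff] using hjk
        have hv2 : (j : ℕ) ≠ (k : ℕ) + 1 := by
          have : (j : ℕ) ≠ (q : ℕ) := by simpa [Fin.ext_iff] using hjq
          simpa [hq] using this
        rw [hA, if_neg hv1, if_neg hv2]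
      have hqval : (q : ℕ) = (k : ℕ) + 1 := rfl
      rw [hrest, hAdiag, hAsub q k hqval]
      ring
    · -- last column : k = N - 1
      apply Finset.sum_eq_zero
      intro j _
      rw [hA]
      by_cases h : (j : ℕ) = (k : ℕ)
      · rw [if_pos h]
        have hNk : ((j : ℕ) : ℝ) + 1 = (N : ℝ) := by
          have : (j : ℕ) + 1 = N := by omega
          exact_mod_cast this
        rw [hNk]; ring
      · rw [if_neg h, if_neg (by have := j.isLt; omega)]
  -- total mass is conserved
  have hAsum : ∀ v : Fin N → ℝ, (∑ j, (A *ᵥ v) j) = 0 := by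
    intro v
    show (∑ j, ∑ k, A j k * v k) = 0
    rw [Finset.sum_comm]
    apply Finset.sum_eq_zero
    intro k _
    rw [← Finset.sum_mul, hcol, zero_mul]
  have hP0 : P 0 = e1 := by
    rw [hPdef]
    simp [zero_smul, NormedSpace.exp_zero, Matrix.one_mulVec]
  have j0 : Fin N := ⟨0, by omega⟩
  have hSum1 : ∀ s : ℝ, (∑ j, P s j) = 1 := by
    have hSd : ∀ s : ℝ, HasDerivAt (fun t => ∑ j, P t j) 0 s := by
      intro s
      have := HasDerivAt.fun_sum (fun j (_ : j ∈ Finset.univ) => hderiv j s)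
      rwa [hAsum] at this
    have hconst : ∀ s : ℝ, (∑ j, P s j) = ∑ j, P 0 j := fun s =>
      is_const_of_deriv_eq_zero (fun x => (hSd x).differentiableAt)
        (fun x => (hSd x).deriv) s 0
    intro s
    rw [hconst s, hP0]
    rw [Finset.sum_eq_single (⟨0, by omega⟩ : Fin N)]
    · rw [he1]; simp
    · intro k _ hk
      rw [he1, if_neg (by simpa [Fin.ext_iff] using hk)]
    · intro h; exact absurd (Finset.mem_univ _) h
  -- components below the last converge to 0
  have hzero : ∀ n : ℕ, ∀ j : Fin N, (j : ℕ) = n → (j : ℕ) < N - 1 →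
      Tendsto (fun s => P s j) atTop (nhds 0) := by
    intro n
    induction n using Nat.strong_induction_on with
    | _ n IH =>
      intro j hjn hj
      have hdpos : 0 < d j := by
        have h1 : (0:ℝ) < ((j : ℕ) : ℝ) + 1 := by positivity
        have h2 : (0:ℝ) < (N : ℝ) - (((j : ℕ) : ℝ) + 1) := by
          have : (j : ℕ) + 1 < N := by omega
          have := (Nat.cast_lt (α := ℝ)).mpr this
          push_cast at this ⊢
          linarith
        exact mul_pos (mul_pos h1 h2) hlc
      rcases Nat.eq_zero_or_pos (j : ℕ) with h0 | hpos
      · exact ode_tendsto_zero hdpos continuous_const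
          (fun s => by rw [← hmv0 (P s) j h0]; exact hderiv j s)
          tendsto_const_nhds
      · set p : Fin N := ⟨(j : ℕ) - 1, by omega⟩ with hp
        have hjp : (j : ℕ) = (p : ℕ) + 1 := by simp [hp]; omega
        have hprev : Tendsto (fun s => P s p) atTop (nhds 0) :=
          IH ((j : ℕ) - 1) (by omega) p (by simp [hp]) (by simp [hp]; omega)
        refine ode_tendsto_zero hdpos (g := fun s => d p * P s p)
          (continuous_const.mul (hPcont p))
          (fun s => by rw [← hmvS (P s) j p hjp]; exact hderiv j s) ?_
        simpa using hprev.const_mul (d p)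
  -- last component converges to 1
  have jN : Fin N := ⟨N - 1, by omega⟩
  have hlast : Tendsto (fun s => P s (⟨N - 1, by omega⟩ : Fin N)) atTop (nhds 1) := by
    set jN : Fin N := ⟨N - 1, by omega⟩ with hjN
    have heq : ∀ s : ℝ, P s jN = 1 - ∑ j ∈ Finset.univ.erase jN, P s j := by
      intro s
      have := Finset.add_sum_erase Finset.univ (P s) (Finset.mem_univ jN)
      rw [hSum1 s] at this
      linarith
    have hsum0 : Tendsto (fun s => ∑ j ∈ Finset.univ.erase jN, P s j) atTop (nhds 0) := by
      have := tendsto_finset_sum (Finset.univ.erase jN)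
        (fun j hj => hzero (j : ℕ) j rfl (by
          have hne := (Finset.mem_erase.mp hj).1
          have : (j : ℕ) ≠ N - 1 := by simpa [hjN, Fin.ext_iff] using hne
          have := j.isLt
          omega))
      simpa using this
    have := tendsto_const_nhds (α := ℝ) (f := atTop) (x := (1:ℝ)) |>.sub hsum0
    rw [sub_zero] at this
    exact this.congr fun s => (heq s).symm
  -- componentwise limits
  have hcomp : ∀ j : Fin N, Tendsto (fun s => P s j) atTop (nhds (eN j)) := by
    intro j
    by_cases hj : (j : ℕ) = N - 1
    · have hjeq : j = (⟨N - 1, by omega⟩ : Fin N) := Fin.ext hj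
      rw [heN, if_pos hj, hjeq]
      exact hlast
    · rw [heN, if_neg hj]
      exact hzero (j : ℕ) j rfl (by have := j.isLt; omega)
  constructor
  · rw [tendsto_pi_nhds]
    exact hcomp
  · have hdot : ∀ s : ℝ, w ⬝ᵥ P s = ∑ j, w j * P s j := fun s => rfl
    have hsum := tendsto_finset_sum Finset.univ
      (fun j (_ : j ∈ Finset.univ) => (hcomp j).const_mul (w j))
    have hval : (∑ j, w j * eN j) = 1 := by
      rw [Finset.sum_eq_single (⟨N - 1, by omega⟩ : Fin N)]
      · have h1 : (((N - 1 : ℕ) : ℝ)) = (N : ℝ) - 1 := by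
          have : (1:ℕ) ≤ N := by omega
          push_cast [this]
          ring
        have h2 : (((⟨N - 1, by omega⟩ : Fin N) : ℕ)) = N - 1 := rfl
        have hne : (N : ℝ) - 1 ≠ 0 := by
          have : (2:ℝ) ≤ (N : ℝ) := by exact_mod_cast hN
          linarith
        rw [heN, hw, h2, if_pos rfl, mul_one, h1, div_self hne]
      · intro k _ hk
        rw [heN, if_neg (by simpa [Fin.ext_iff] using hk), mul_zero]
      · intro h; exact absurd (Finset.mem_univ _) h
    rw [← hval]
    exact hsum.congr fun s => (hdot s).symm
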